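/- Let M_1 and M_2 be positive semidefinite operators on ⊗_{j=1}^N (H_j^out ⊗ H_j^in) with Tr M_1 = Tr M_2 and (1/2)||M_1 − M_2||_1 ≤ ε for some ε ≥ 0. Then |w_max(M_1) − w_max(M_2)| ≤ D·ε, where D = ∏_{j=1}^N dim(H_j^in) and ||·||_1 is the trace norm. -/

import Mathlib

open Matrix Filter
open scoped ComplexOrder

attribute [local instance] Classical.propDecidable

noncomputable section

namespace QComb

/-- Dimension of the `j`-th factor of the partial tensor product keeping only
the first `n` factors (the remaining factors are replaced by trivial spaces). -/
def cut {N : ℕ} (d : Fin N → ℕ) (n : ℕ) (j : Fin N) : ℕ := if j.val < n then d j else 1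

/-- Index set of the tensor product of the first `n` factors of the family of
Hilbert spaces `ℂ^{d j}`, `j : Fin N`. -/
def CutIdx {N : ℕ} (d : Fin N → ℕ) (n : ℕ) : Type := ∀ j : Fin N, Fin (cut d n j)

instance {N : ℕ} (d : Fin N → ℕ) (n : ℕ) : Fintype (CutIdx d n) := Pi.instFintype

instance {N : ℕ} (d : Fin N → ℕ) (n : ℕ) : DecidableEq (CutIdx d n) :=
  fun a b => Fintype.decidablePiFintype a b

/-- Operators on the tensor product `⊗_{j<n} (H_j^out ⊗ H_j^in)` where
`H_j^out = ℂ^{dO j}` and `H_j^in = ℂ^{dI j}`. -/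
abbrev CMat {N : ℕ} (dO dI : Fin N → ℕ) (n : ℕ) : Type :=
  Matrix (CutIdx dO n × CutIdx dI n) (CutIdx dO n × CutIdx dI n) ℂ

/-- Extend an index on the first `n` factors by a value `k` in the `n`-th factor. -/
def extendAt {N : ℕ} (d : Fin N → ℕ) (n : Fin N) (x : CutIdx d n.val) (k : Fin (d n)) :
    CutIdx d (n.val + 1) := fun j =>
  if h : j.val < n.val then
    Fin.cast (show cut d n.val j = cut d (n.val + 1) j by
      simp [cut, h, Nat.lt_succ_of_lt h]) (x j)
  else if h2 : j.val < n.val + 1 then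
    Fin.cast (show d n = cut d (n.val + 1) j by
      have hje : j = n := Fin.ext (by omega)
      subst hje; simp [cut, h2]) k
  else
    Fin.cast (show cut d n.val j = cut d (n.val + 1) j by simp [cut, h, h2]) (x j)

/-- Restrict an index on the first `n+1` factors to the first `n` factors. -/
def restrictAt {N : ℕ} (d : Fin N → ℕ) (n : Fin N) (x : CutIdx d (n.val + 1)) :
    CutIdx d n.val := fun j =>
  if h : j.val < n.val then
    Fin.cast (show cut d (n.val + 1) j = cut d n.val j by
      simp [cut, h, Nat.lt_succ_of_lt h]) (x j)
  else
    ⟨0, by simp only [cut, if_neg h]; omega⟩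

/-- The component of an index on the first `n+1` factors in the `n`-th factor. -/
def componentAt {N : ℕ} (d : Fin N → ℕ) (n : Fin N) (x : CutIdx d (n.val + 1)) :
    Fin (d n) :=
  Fin.cast (show cut d (n.val + 1) n = d n by simp [cut]) (x n)

/-- Partial trace over the `n`-th output space. -/
def ptraceO {N : ℕ} (dO : Fin N → ℕ) (n : Fin N) {β : Type} [Fintype β]
    (M : Matrix (CutIdx dO (n.val + 1) × β) (CutIdx dO (n.val + 1) × β) ℂ) :
    Matrix (CutIdx dO n.val × β) (CutIdx dO n.val × β) ℂ :=
  fun p q => ∑ k : Fin (dO n), M (extendAt dO n p.1 k, p.2) (extendAt dO n q.1 k, q.2)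

/-- Partial trace over the `n`-th input space. -/
def ptraceI {N : ℕ} (dI : Fin N → ℕ) (n : Fin N) {α : Type} [Fintype α]
    (M : Matrix (α × CutIdx dI (n.val + 1)) (α × CutIdx dI (n.val + 1)) ℂ) :
    Matrix (α × CutIdx dI n.val) (α × CutIdx dI n.val) ℂ :=
  fun p q => ∑ k : Fin (dI n), M (p.1, extendAt dI n p.2 k) (q.1, extendAt dI n q.2 k)

/-- Tensoring with the identity on the `n`-th output space. -/
def idTensorO {N : ℕ} (dO : Fin N → ℕ) (n : Fin N) {β : Type}
    (M : Matrix (CutIdx dO n.val × β) (CutIdx dO n.val × β) ℂ) :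
    Matrix (CutIdx dO (n.val + 1) × β) (CutIdx dO (n.val + 1) × β) ℂ :=
  fun p q => (if componentAt dO n p.1 = componentAt dO n q.1 then (1 : ℂ) else 0) *
    M (restrictAt dO n p.1, p.2) (restrictAt dO n q.1, q.2)

/-- Tensoring with the identity on the `n`-th input space. -/
def idTensorI {N : ℕ} (dI : Fin N → ℕ) (n : Fin N) {α : Type}
    (M : Matrix (α × CutIdx dI n.val) (α × CutIdx dI n.val) ℂ) :
    Matrix (α × CutIdx dI (n.val + 1)) (α × CutIdx dI (n.val + 1)) ℂ :=
  fun p q => (if componentAt dI n p.2 = componentAt dI n q.2 then (1 : ℂ) else 0) *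
    M (p.1, restrictAt dI n p.2) (q.1, restrictAt dI n q.2)

/-- Transport an operator along an equality of the number of kept factors. -/
def castCMat {N : ℕ} (dO dI : Fin N → ℕ) {a b : ℕ} (h : a = b) (M : CMat dO dI a) :
    CMat dO dI b := h ▸ M

/-- `C` is a quantum comb on `⊗_{j=1}^N (H_j^out ⊗ H_j^in)`:
it is positive semidefinite and admits a chain `C⁽ⁿ⁾` of positive semidefinite operators with
`C⁽ᴺ⁾ = C`, `C⁽⁰⁾ = 1` and `Tr_{H_n^out} C⁽ⁿ⁾ = I_{H_n^in} ⊗ C⁽ⁿ⁻¹⁾`. -/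
def IsQuantumComb {N : ℕ} (dO dI : Fin N → ℕ) (C : CMat dO dI N) : Prop :=
  C.PosSemidef ∧ ∃ Cn : (n : ℕ) → CMat dO dI n,
    (∀ n ≤ N, (Cn n).PosSemidef) ∧ Cn N = C ∧ Cn 0 = 1 ∧
    ∀ n : Fin N, ptraceO dO n (Cn (n.val + 1)) = idTensorI dI n (Cn n.val)

/-- `Γ` is a dual comb: `Γ = I_{H_N^out} ⊗ Γ⁽ᴺ⁾` for a chain of positive semidefinite operators
`Γ⁽ⁿ⁾` on `H_n^in ⊗ (⊗_{j<n} (H_j^out ⊗ H_j^in))` with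
`Tr_{H_n^in} Γ⁽ⁿ⁾ = I_{H_{n-1}^out} ⊗ Γ⁽ⁿ⁻¹⁾` and `Tr_{H_1^in} Γ⁽¹⁾ = 1`.
Here `G m` plays the role of `Γ⁽ᵐ⁺¹⁾`. -/
def IsDualComb {N : ℕ} (dO dI : Fin N → ℕ) (Γ : CMat dO dI N) : Prop :=
  ∃ G : (m : ℕ) → Matrix (CutIdx dO m × CutIdx dI (m + 1)) (CutIdx dO m × CutIdx dI (m + 1)) ℂ,
    (∀ m < N, (G m).PosSemidef) ∧
    (∀ h0 : 0 < N, ptraceI dI ⟨0, h0⟩ (G 0) = 1) ∧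
    (∀ m, ∀ h : m + 1 < N,
      ptraceI dI ⟨m + 1, h⟩ (G (m + 1)) = idTensorO dO ⟨m, Nat.lt_of_succ_lt h⟩ (G m)) ∧
    (∀ m, ∀ h : m + 1 = N,
      Γ = castCMat dO dI h (idTensorO dO ⟨m, h ▸ Nat.lt_succ_self m⟩ (G m))) ∧
    (N = 0 → Γ = 1)

/-- Square root of a positive semidefinite matrix, as `Matrix.PosSemidef.sqrt` was defined
in the older Mathlib (removed since). -/
def _root_.Matrix.PosSemidef.sqrt {𝕜 : Type*} [RCLike 𝕜] {n : Type*} [Fintype n] [DecidableEq n]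
    {A : Matrix n n 𝕜} (hA : A.PosSemidef) : Matrix n n 𝕜 :=
  (hA.1.eigenvectorUnitary : Matrix n n 𝕜) * diagonal ((↑) ∘ Real.sqrt ∘ hA.1.eigenvalues) *
    (star hA.1.eigenvectorUnitary : Matrix n n 𝕜)

/-- The trace norm `‖A‖₁ = Tr √(AᴴA)`. -/
def traceNorm {ι : Type} [Fintype ι] [DecidableEq ι] (A : Matrix ι ι ℂ) : ℝ :=
  ((Matrix.posSemidef_conjTranspose_mul_self A).sqrt.trace).re

/-- Square root of a positive semidefinite matrix (junk value `0` otherwise). -/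
def msqrt {ι : Type} [Fintype ι] [DecidableEq ι] (A : Matrix ι ι ℂ) : Matrix ι ι ℂ :=
  if h : A.PosSemidef then h.sqrt else 0

/-- Positive part `A₊` of a Hermitian matrix (junk value `0` otherwise). -/
def posPartMat {ι : Type} [Fintype ι] [DecidableEq ι] (A : Matrix ι ι ℂ) : Matrix ι ι ℂ :=
  if h : A.IsHermitian then h.cfc (fun x => max x 0) else 0

/-- Matrix logarithm in base 2 of a Hermitian matrix via the functional calculus
(junk value `0` otherwise). -/
def mlog {ι : Type} [Fintype ι] [DecidableEq ι] (A : Matrix ι ι ℂ) : Matrix ι ι ℂ :=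
  if h : A.IsHermitian then h.cfc (Real.logb 2) else 0

/-- Quantum relative entropy `D(ρ‖σ) = Tr[ρ (log ρ - log σ)]` (base-2 logarithm). -/
def relEnt {ι : Type} [Fintype ι] [DecidableEq ι] (ρ σ : Matrix ι ι ℂ) : ℝ :=
  ((ρ * (mlog ρ - mlog σ)).trace).re

/-- Support inclusion `supp A ⊆ supp B` (ranges of the associated linear maps). -/
def suppSubset {ι : Type} [Fintype ι] [DecidableEq ι] (A B : Matrix ι ι ℂ) : Prop :=
  LinearMap.range (Matrix.toLin' A) ≤ LinearMap.range (Matrix.toLin' B)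

/-- The feasible set of the max-relative entropy `D_max(A‖B)`. -/
def DmaxSet {ι : Type} [Fintype ι] [DecidableEq ι] (A B : Matrix ι ι ℂ) : Set ℝ :=
  {lam : ℝ | 0 ≤ lam ∧ ((lam : ℂ) • B - A).PosSemidef}

/-- Max-relative entropy `D_max(A‖B) = log min {λ ≥ 0 | λB - A ≥ 0}`, equal to `⊤`
when no such `λ` exists (i.e. when `supp A ⊄ supp B`). -/
def Dmax {ι : Type} [Fintype ι] [DecidableEq ι] (A B : Matrix ι ι ℂ) : EReal :=
  if (DmaxSet A B).Nonempty then ((Real.logb 2 (sInf (DmaxSet A B)) : ℝ) : EReal) else ⊤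

/-- Smooth max-relative entropy of quantum combs:
`D_max^ε(C₀‖C₁) = min { D_max(C̃‖C₁) | C̃ a quantum comb, ½‖C̃ - C₀‖₁ ≤ ε }`. -/
def DmaxSmoothComb {N : ℕ} (dO dI : Fin N → ℕ) (ε : ℝ) (C0 C1 : CMat dO dI N) : EReal :=
  sInf { x : EReal | ∃ C : CMat dO dI N, IsQuantumComb dO dI C ∧
    traceNorm (C - C0) ≤ 2 * ε ∧ x = Dmax C C1 }

/-- Revised smooth max-relative entropy of quantum combs:
`D̃_max^ε(C₀‖C₁) = max_Γ min { D_max(C‖√Γ C₁ √Γ) | C ≥ 0, Tr C = 1,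
½‖√Γ C₀ √Γ - C‖₁ ≤ ε }`, the max over dual combs `Γ`. -/
def DmaxTilde {N : ℕ} (dO dI : Fin N → ℕ) (ε : ℝ) (C0 C1 : CMat dO dI N) : EReal :=
  sSup { x : EReal | ∃ Γ : CMat dO dI N, IsDualComb dO dI Γ ∧
    x = sInf { y : EReal | ∃ C : CMat dO dI N, C.PosSemidef ∧ C.trace = 1 ∧
      traceNorm (msqrt Γ * C0 * msqrt Γ - C) ≤ 2 * ε ∧
      y = Dmax C (msqrt Γ * C1 * msqrt Γ) } }

/-- Hypothesis-testing quantity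
`β_δ(C₀‖C₁) = min { Tr[Π √Γ C₁ √Γ] | 0 ≤ Π ≤ I, Γ dual comb, Tr[(I-Π) √Γ C₀ √Γ] ≤ δ }`. -/
def betaHT {N : ℕ} (dO dI : Fin N → ℕ) (δ : ℝ) (C0 C1 : CMat dO dI N) : ℝ :=
  sInf { b : ℝ | ∃ P Γ : CMat dO dI N, P.PosSemidef ∧ ((1 : CMat dO dI N) - P).PosSemidef ∧
    IsDualComb dO dI Γ ∧
    (((1 - P) * (msqrt Γ * C0 * msqrt Γ)).trace).re ≤ δ ∧
    b = ((P * (msqrt Γ * C1 * msqrt Γ)).trace).re }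

/-- Maximum score `w_max(Ω) = max { Tr(Ω C) | C a quantum comb }`. -/
def wmax {N : ℕ} (dO dI : Fin N → ℕ) (Ω : CMat dO dI N) : ℝ :=
  sSup { w : ℝ | ∃ C : CMat dO dI N, IsQuantumComb dO dI C ∧ w = ((Ω * C).trace).re }

/-- Smooth maximum score `w_max^ε(Ω) = sup { w_max(Ω') | Ω' ≥ 0, Tr Ω' = Tr Ω,
½‖Ω - Ω'‖₁ ≤ ε }`. -/
def wmaxSmooth {N : ℕ} (dO dI : Fin N → ℕ) (ε : ℝ) (Ω : CMat dO dI N) : ℝ :=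
  sSup { w : ℝ | ∃ Ω' : CMat dO dI N, Ω'.PosSemidef ∧ traceNorm (Ω - Ω') ≤ 2 * ε ∧
    Ω'.trace = Ω.trace ∧ w = wmax dO dI Ω' }

/-- Dimension function of the `n`-fold concatenated network. -/
def repDim {N : ℕ} (n : ℕ) (d : Fin N → ℕ) : Fin (n * N) → ℕ :=
  fun j => d ⟨j.val % N, Nat.mod_lt _ (Nat.pos_of_ne_zero fun h =>
    Nat.not_lt_zero j.val (by simpa [h] using j.isLt))⟩

/-- Extract the `i`-th copy of an index of the `n`-fold concatenated network. -/
def sliceIdx {N : ℕ} (n : ℕ) (d : Fin N → ℕ) (i : Fin n) (x : CutIdx (repDim n d) (n * N)) :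
    CutIdx d N := fun j =>
  Fin.cast (by
    have hj := j.isLt
    have h1 : (i.val + 1) * N ≤ n * N := Nat.mul_le_mul_right N i.isLt
    have h2 : (i.val + 1) * N = i.val * N + N := Nat.succ_mul _ _
    have hb : i.val * N + j.val < n * N := by omega
    have hm : (i.val * N + j.val) % N = j.val := by
      rw [Nat.add_comm, Nat.add_mul_mod_self_right]; exact Nat.mod_eq_of_lt hj
    show cut (repDim n d) (n * N) ⟨i.val * N + j.val, hb⟩ = cut d N j
    simp only [cut, repDim, if_pos hb, if_pos hj]
    exact congrArg d (Fin.ext hm))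
    (x ⟨i.val * N + j.val, by
      have hj := j.isLt
      have h1 : (i.val + 1) * N ≤ n * N := Nat.mul_le_mul_right N i.isLt
      have h2 : (i.val + 1) * N = i.val * N + N := Nat.succ_mul _ _
      omega⟩)

/-- The `n`-fold tensor power `Ω^{⊗n}` on the `n`-fold concatenated network. -/
def tpow {N : ℕ} (dO dI : Fin N → ℕ) (n : ℕ) (Ω : CMat dO dI N) :
    CMat (repDim n dO) (repDim n dI) (n * N) :=
  fun p q => ∏ i : Fin n,
    Ω (sliceIdx n dO i p.1, sliceIdx n dI i p.2) (sliceIdx n dO i q.1, sliceIdx n dI i q.2)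

/-- Extract the left part of an index of the concatenation of two networks. -/
def appendIdxL {N M : ℕ} (d : Fin N → ℕ) (e : Fin M → ℕ)
    (x : CutIdx (Fin.append d e) (N + M)) : CutIdx d N := fun j =>
  Fin.cast (by
    show cut (Fin.append d e) (N + M) (Fin.castAdd M j) = cut d N j
    simp only [cut, if_pos (Fin.castAdd M j).isLt, if_pos j.isLt]
    exact Fin.append_left d e j) (x (Fin.castAdd M j))

/-- Extract the right part of an index of the concatenation of two networks. -/
def appendIdxR {N M : ℕ} (d : Fin N → ℕ) (e : Fin M → ℕ)
    (x : CutIdx (Fin.append d e) (N + M)) : CutIdx e M := fun j =>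
  Fin.cast (by
    show cut (Fin.append d e) (N + M) (Fin.natAdd N j) = cut e M j
    simp only [cut, if_pos (Fin.natAdd N j).isLt, if_pos j.isLt]
    exact Fin.append_right d e j) (x (Fin.natAdd N j))

/-- The tensor product `C ⊗ C'` of operators on two networks, as an operator on the
concatenated network with `N + M` steps. -/
def tens2 {N M : ℕ} {dO dI : Fin N → ℕ} {eO eI : Fin M → ℕ}
    (C : CMat dO dI N) (C' : CMat eO eI M) :
    CMat (Fin.append dO eO) (Fin.append dI eI) (N + M) :=
  fun p q =>
    C (appendIdxL dO eO p.1, appendIdxL dI eI p.2) (appendIdxL dO eO q.1, appendIdxL dI eI q.2) *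
    C' (appendIdxR dO eO p.1, appendIdxR dI eI p.2) (appendIdxR dO eO q.1, appendIdxR dI eI q.2)


section MatrixAux

variable {ι : Type} [Fintype ι] [DecidableEq ι]

lemma trace_conj_diag (U : Matrix ι ι ℂ) (hU : star U * U = 1) (g : ι → ℂ) :
    (U * diagonal g * star U).trace = ∑ i, g i := by
  rw [trace_mul_cycle, hU, one_mul, trace_diagonal]

lemma conj_diag_mul (U : Matrix ι ι ℂ) (hU : star U * U = 1) (g h : ι → ℂ) :
    (U * diagonal g * star U) * (U * diagonal h * star U)
      = U * diagonal (fun i => g i * h i) * star U := by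
  have h1 : star U * (U * diagonal h * star U) = diagonal h * star U := by
    rw [← mul_assoc, ← mul_assoc, hU, one_mul]
  calc (U * diagonal g * star U) * (U * diagonal h * star U)
      = U * diagonal g * (star U * (U * diagonal h * star U)) := by
        simp only [mul_assoc]
    _ = U * diagonal (fun i => g i * h i) * star U := by
        rw [h1, show U * diagonal g * (diagonal h * star U) = U * (diagonal g * diagonal h) * star U
          by simp only [mul_assoc], diagonal_mul_diagonal]

lemma psd_diag_nonneg {E : Matrix ι ι ℂ} (hE : E.PosSemidef) (i : ι) : 0 ≤ E i i := by
  exact hE.diag_nonneg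

lemma trace_eq_sum_eigen {Δ : Matrix ι ι ℂ} (hΔ : Δ.IsHermitian) :
    Δ.trace = ∑ i, (hΔ.eigenvalues i : ℂ) := by
  have hU1 : star (hΔ.eigenvectorUnitary : Matrix ι ι ℂ) * (hΔ.eigenvectorUnitary : Matrix ι ι ℂ) = 1 :=
    Matrix.mem_unitaryGroup_iff'.mp hΔ.eigenvectorUnitary.2
  conv_lhs => rw [hΔ.spectral_theorem, Unitary.conjStarAlgAut_apply]
  rw [trace_conj_diag _ hU1]
  rfl

lemma trace_mul_spectral {Δ : Matrix ι ι ℂ} (C : Matrix ι ι ℂ) (hΔ : Δ.IsHermitian) :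
    (Δ * C).trace = ∑ i, (hΔ.eigenvalues i : ℂ) *
      ((star (hΔ.eigenvectorUnitary : Matrix ι ι ℂ) * C * (hΔ.eigenvectorUnitary : Matrix ι ι ℂ)) i i) := by
  set U : Matrix ι ι ℂ := (hΔ.eigenvectorUnitary : Matrix ι ι ℂ) with hUdef
  set g : ι → ℂ := RCLike.ofReal ∘ hΔ.eigenvalues with hgdef
  have h1 : U * diagonal g * star U * C = U * (diagonal g * (star U * C)) := by
    simp only [mul_assoc]
  conv_lhs => rw [hΔ.spectral_theorem, Unitary.conjStarAlgAut_apply]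
  rw [h1, Matrix.trace_mul_comm]
  have h2 : diagonal g * (star U * C) * U = diagonal g * (star U * C * U) := by
    simp only [mul_assoc]
  rw [h2, Matrix.trace]
  simp only [Matrix.diag, Matrix.diagonal_mul]
  rfl

open scoped MatrixOrder in
lemma psd_sqrt_eq_cfc {A : Matrix ι ι ℂ} (hA : A.PosSemidef) : hA.sqrt = CFC.sqrt A := by
  rw [CFC.sqrt_eq_cfc, cfc_nnreal_eq_real _ A hA.nonneg, hA.1.cfc_eq]
  simp only [IsHermitian.cfc, Matrix.PosSemidef.sqrt, Unitary.conjStarAlgAut_apply]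
  have h0 : ∀ j, max (hA.1.eigenvalues j) 0 = hA.1.eigenvalues j :=
    fun j => max_eq_left (hA.eigenvalues_nonneg j)
  simp only [Function.comp_def, Real.coe_sqrt, Real.coe_toNNReal', h0]

open scoped MatrixOrder in
lemma traceNormAux {Δ : Matrix ι ι ℂ} (hΔ : Δ.IsHermitian) :
    (((Matrix.posSemidef_conjTranspose_mul_self Δ).sqrt.trace).re : ℝ)
      = ∑ i, |hΔ.eigenvalues i| := by
  set U : Matrix ι ι ℂ := (hΔ.eigenvectorUnitary : Matrix ι ι ℂ) with hUdef
  have hU1 : star U * U = 1 := Matrix.mem_unitaryGroup_iff'.mp hΔ.eigenvectorUnitary.2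
  set g : ι → ℂ := fun i => ((|hΔ.eigenvalues i| : ℝ) : ℂ) with hgdef
  have hd : (diagonal g).PosSemidef := posSemidef_diagonal_iff.mpr fun i =>
    Complex.zero_le_real.mpr (abs_nonneg _)
  have hQ : (U * diagonal g * star U).PosSemidef := by
    have := hd.mul_mul_conjTranspose_same U
    rwa [Matrix.star_eq_conjTranspose]
  have hsq : (U * diagonal g * star U) ^ 2 = Δᴴ * Δ := by
    rw [pow_two, conj_diag_mul U hU1, hΔ.eq]
    conv_rhs => rw [hΔ.spectral_theorem, Unitary.conjStarAlgAut_apply]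
    rw [conj_diag_mul U hU1]
    have hfun : (fun i => g i * g i)
        = (fun i => (RCLike.ofReal ∘ hΔ.eigenvalues) i * (RCLike.ofReal ∘ hΔ.eigenvalues) i) := by
      funext i
      simp only [hgdef, Function.comp_apply]
      rw [← Complex.ofReal_mul, abs_mul_abs_self, Complex.ofReal_mul]
      rfl
    rw [hfun]
  have heq : U * diagonal g * star U = (Matrix.posSemidef_conjTranspose_mul_self Δ).sqrt := by
    rw [psd_sqrt_eq_cfc]
    exact (CFC.sqrt_unique (by rw [← pow_two]; exact hsq) hQ.nonneg).symm
  rw [← heq, trace_conj_diag U hU1, hgdef, ← Complex.ofReal_sum, Complex.ofReal_re]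

lemma exists_rep {Δ C : Matrix ι ι ℂ} (hΔ : Δ.IsHermitian) (hC : C.PosSemidef)
    {D : ℝ} (hCtr : C.trace = (D : ℂ)) :
    ∃ e : ι → ℝ, (∀ i, 0 ≤ e i) ∧ (∑ i, e i = D) ∧ (∀ i, e i ≤ D) ∧
      ((Δ * C).trace).re = ∑ i, hΔ.eigenvalues i * e i := by
  set U : Matrix ι ι ℂ := (hΔ.eigenvectorUnitary : Matrix ι ι ℂ) with hUdef
  have hU1 : star U * U = 1 := Matrix.mem_unitaryGroup_iff'.mp hΔ.eigenvectorUnitary.2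
  have hU2 : U * star U = 1 := Matrix.mem_unitaryGroup_iff.mp hΔ.eigenvectorUnitary.2
  set E : Matrix ι ι ℂ := star U * C * U with hEdef
  have hE : E.PosSemidef := by
    have := hC.conjTranspose_mul_mul_same U
    rwa [← Matrix.star_eq_conjTranspose] at this
  have hEnn : ∀ i, 0 ≤ (E i i).re := fun i => (Complex.le_def.mp (psd_diag_nonneg hE i)).1
  have hEtr : E.trace = C.trace := by
    rw [hEdef, trace_mul_cycle, hU2, one_mul]
  have hsum : ∑ i, (E i i).re = D := by
    have : E.trace = (D : ℂ) := hEtr.trans hCtr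
    have h2 : (E.trace).re = D := by rw [this, Complex.ofReal_re]
    rw [← h2, Matrix.trace, Complex.re_sum]
    rfl
  refine ⟨fun i => (E i i).re, hEnn, hsum, ?_, ?_⟩
  · intro i
    rw [← hsum]
    exact Finset.single_le_sum (f := fun i => (E i i).re) (fun j _ => hEnn j) (Finset.mem_univ i)
  · rw [trace_mul_spectral C hΔ, Complex.re_sum]
    exact Finset.sum_congr rfl fun i _ => Complex.re_ofReal_mul _ _

lemma core_bound {Δ C : Matrix ι ι ℂ} (hΔ : Δ.IsHermitian) (hC : C.PosSemidef)
    {D ε : ℝ} (hD : 0 ≤ D) (hCtr : C.trace = (D : ℂ)) (hΔtr : Δ.trace = 0)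
    (hTN : ∑ i, |hΔ.eigenvalues i| ≤ 2 * ε) :
    |((Δ * C).trace).re| ≤ D * ε := by
  obtain ⟨e, he0, hesum, heD, hrep⟩ := exists_rep hΔ hC hCtr
  have hlam0 : ∑ i, hΔ.eigenvalues i = 0 := by
    have := trace_eq_sum_eigen hΔ
    rw [hΔtr] at this
    have h2 := congrArg Complex.re this.symm
    rw [Complex.re_sum] at h2
    simpa using h2
  have key : ((Δ * C).trace).re = ∑ i, hΔ.eigenvalues i * (e i - D / 2) := by
    rw [hrep]
    simp only [mul_sub, Finset.sum_sub_distrib, ← Finset.sum_mul, hlam0, zero_mul, sub_zero]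
  rw [key]
  calc |∑ i, hΔ.eigenvalues i * (e i - D / 2)|
      ≤ ∑ i, |hΔ.eigenvalues i * (e i - D / 2)| := Finset.abs_sum_le_sum_abs _ _
    _ ≤ ∑ i, |hΔ.eigenvalues i| * (D / 2) := by
        refine Finset.sum_le_sum fun i _ => ?_
        rw [abs_mul]
        refine mul_le_mul_of_nonneg_left ?_ (abs_nonneg _)
        rw [abs_le]
        constructor <;> linarith [heD i, he0 i]
    _ = (∑ i, |hΔ.eigenvalues i|) * (D / 2) := by rw [Finset.sum_mul]
    _ ≤ (2 * ε) * (D / 2) := by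
        refine mul_le_mul_of_nonneg_right hTN (by linarith)
    _ = D * ε := by ring

lemma ub_bound {M C : Matrix ι ι ℂ} (hM : M.PosSemidef) (hC : C.PosSemidef)
    {D : ℝ} (hD : 0 ≤ D) (hCtr : C.trace = (D : ℂ)) :
    ((M * C).trace).re ≤ (M.trace).re * D := by
  obtain ⟨e, he0, hesum, heD, hrep⟩ := exists_rep hM.1 hC hCtr
  rw [hrep]
  have htr : (M.trace).re = ∑ i, hM.1.eigenvalues i := by
    rw [trace_eq_sum_eigen hM.1, Complex.re_sum]
    exact Finset.sum_congr rfl fun i _ => Complex.ofReal_re _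
  rw [htr, Finset.sum_mul]
  exact Finset.sum_le_sum fun i _ =>
    mul_le_mul_of_nonneg_left (heD i) (hM.eigenvalues_nonneg i)


end MatrixAux

section CombAux

variable {N : ℕ}

lemma restrict_extend (d : Fin N → ℕ) (n : Fin N) (x : CutIdx d n.val) (k : Fin (d n)) :
    restrictAt d n (extendAt d n x k) = x := by
  funext j
  by_cases h : j.val < n.val
  · apply Fin.ext
    simp [restrictAt, extendAt, h]
  · apply Fin.ext
    have hx := (x j).isLt
    simp only [cut, if_neg h] at hx
    simp only [restrictAt, dif_neg h]
    omega

lemma component_extend (d : Fin N → ℕ) (n : Fin N) (x : CutIdx d n.val) (k : Fin (d n)) :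
    componentAt d n (extendAt d n x k) = k := by
  apply Fin.ext
  simp [componentAt, extendAt]

lemma extend_restrict (d : Fin N → ℕ) (n : Fin N) (y : CutIdx d (n.val + 1)) :
    extendAt d n (restrictAt d n y) (componentAt d n y) = y := by
  funext j
  apply Fin.ext
  by_cases h : j.val < n.val
  · simp [extendAt, restrictAt, h]
  · by_cases h2 : j.val < n.val + 1
    · have hj : j = n := Fin.ext (by omega)
      subst hj
      simp [extendAt, componentAt, h]
    · have hy := (y j).isLt
      simp only [cut, if_neg h2] at hy
      simp [extendAt, restrictAt, h, h2]
      omega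

/-- The equivalence `CutIdx d n × Fin (d n) ≃ CutIdx d (n+1)`. -/
def extEquiv (d : Fin N → ℕ) (n : Fin N) : CutIdx d n.val × Fin (d n) ≃ CutIdx d (n.val + 1) where
  toFun p := extendAt d n p.1 p.2
  invFun y := (restrictAt d n y, componentAt d n y)
  left_inv p := by
    exact Prod.ext (restrict_extend d n p.1 p.2) (component_extend d n p.1 p.2)
  right_inv y := extend_restrict d n y

lemma trace_ptraceO (dO : Fin N → ℕ) (n : Fin N) {β : Type} [Fintype β]
    (M : Matrix (CutIdx dO (n.val + 1) × β) (CutIdx dO (n.val + 1) × β) ℂ) :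
    (ptraceO dO n M).trace = M.trace := by
  calc (ptraceO dO n M).trace
      = ∑ x : CutIdx dO n.val, ∑ b : β, ∑ k : Fin (dO n),
          M (extendAt dO n x k, b) (extendAt dO n x k, b) := by
        rw [Matrix.trace, Fintype.sum_prod_type]; rfl
    _ = ∑ x : CutIdx dO n.val, ∑ k : Fin (dO n), ∑ b : β,
          M (extendAt dO n x k, b) (extendAt dO n x k, b) :=
        Finset.sum_congr rfl fun x _ => Finset.sum_comm
    _ = M.trace := by
        rw [Matrix.trace, ← Equiv.sum_comp ((extEquiv dO n).prodCongr (Equiv.refl β))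
          (fun y => M.diag y)]
        simp only [Fintype.sum_prod_type, Equiv.prodCongr_apply, Equiv.coe_refl, Prod.map,
          extEquiv, Equiv.coe_fn_mk, Matrix.diag, id]

lemma trace_idTensorI (dI : Fin N → ℕ) (n : Fin N) {α : Type} [Fintype α]
    (X : Matrix (α × CutIdx dI n.val) (α × CutIdx dI n.val) ℂ) :
    (idTensorI dI n X).trace = (dI n : ℂ) * X.trace := by
  calc (idTensorI dI n X).trace
      = ∑ a : α, ∑ y : CutIdx dI (n.val + 1),
          X (a, restrictAt dI n y) (a, restrictAt dI n y) := by
        rw [Matrix.trace, Fintype.sum_prod_type]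
        simp [Matrix.diag, idTensorI]
    _ = ∑ a : α, ∑ x : CutIdx dI n.val, ∑ _k : Fin (dI n), X (a, x) (a, x) := by
        refine Finset.sum_congr rfl fun a _ => ?_
        rw [← Equiv.sum_comp (extEquiv dI n)
          (fun y => X (a, restrictAt dI n y) (a, restrictAt dI n y))]
        simp only [Fintype.sum_prod_type, extEquiv, Equiv.coe_fn_mk, restrict_extend]
    _ = (dI n : ℂ) * X.trace := by
        simp only [Finset.sum_const, Finset.card_univ, Fintype.card_fin, nsmul_eq_mul]
        rw [Matrix.trace, Fintype.sum_prod_type, Finset.mul_sum]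
        refine Finset.sum_congr rfl fun a _ => ?_
        rw [Finset.mul_sum]
        rfl

lemma prod_if_succ (c : Fin N → ℂ) (n : Fin N) :
    (∏ j, if j.val < n.val + 1 then c j else 1)
      = c n * ∏ j, if j.val < n.val then c j else 1 := by
  rw [← Finset.mul_prod_erase Finset.univ (fun j : Fin N => if j.val < n.val + 1 then c j else 1)
      (Finset.mem_univ n),
    ← Finset.mul_prod_erase Finset.univ (fun j : Fin N => if j.val < n.val then c j else 1)
      (Finset.mem_univ n)]
  simp only [Nat.lt_succ_self, if_pos, lt_irrefl, if_neg, if_false, one_mul]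
  congr 1
  refine Finset.prod_congr rfl fun j hj => ?_
  have hne : j ≠ n := (Finset.mem_erase.mp hj).1
  have hv : (j : ℕ) ≠ n.val := fun h => hne (Fin.ext h)
  exact if_congr (by omega) rfl rfl

lemma comb_trace {dO dI : Fin N → ℕ} {C : CMat dO dI N}
    (h : IsQuantumComb dO dI C) : C.trace = ∏ j, (dI j : ℂ) := by
  obtain ⟨-, Cn, -, hN, h0, hchain⟩ := h
  have H : ∀ n, n ≤ N → (Cn n).trace = ∏ j : Fin N, if j.val < n then (dI j : ℂ) else 1 := by
    intro n
    induction n with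
    | zero =>
      intro _
      rw [h0]
      have h1 : ∀ (d : Fin N → ℕ) (x y : CutIdx d 0), x = y := by
        intro d x y; funext j; apply Fin.ext
        have hx := (x j).isLt; have hy := (y j).isLt
        simp only [cut, if_neg (Nat.not_lt_zero _)] at hx hy; omega
      have hcard : Fintype.card (CutIdx dO 0 × CutIdx dI 0) = 1 := by
        rw [Fintype.card_eq_one_iff]
        refine ⟨(fun j => ⟨0, ?_⟩, fun j => ⟨0, ?_⟩),
          fun y => Prod.ext (h1 _ _ _) (h1 _ _ _)⟩ <;> simp [cut]
      rw [Matrix.trace_one, hcard]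
      simp
    | succ n ih =>
      intro hle
      have hn : n < N := Nat.lt_of_succ_le hle
      have hc := hchain ⟨n, hn⟩
      have t1 := trace_ptraceO dO ⟨n, hn⟩ (Cn (n + 1))
      rw [← t1, hc, trace_idTensorI, ih (le_of_lt hn),
        ← prod_if_succ (fun j => (dI j : ℂ)) ⟨n, hn⟩]
  rw [← hN, H N le_rfl]
  exact Finset.prod_congr rfl fun j _ => if_pos j.isLt

end CombAux

/-- If `M₁, M₂ ≥ 0` have equal traces and `½‖M₁ - M₂‖₁ ≤ ε`, then
`|w_max(M₁) - w_max(M₂)| ≤ D ε` with `D = ∏_j dim H_j^in`. -/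
theorem abs_wmax_sub_wmax_le {N : ℕ} (dO dI : Fin N → ℕ) (M1 M2 : CMat dO dI N)
    (h1 : M1.PosSemidef) (h2 : M2.PosSemidef) (htr : M1.trace = M2.trace)
    (ε : ℝ) (hε : 0 ≤ ε) (hdist : traceNorm (M1 - M2) ≤ 2 * ε) :
    |wmax dO dI M1 - wmax dO dI M2| ≤ (∏ j, (dI j : ℝ)) * ε := by
  set D : ℝ := ∏ j, (dI j : ℝ) with hDdef
  have hD0 : 0 ≤ D := Finset.prod_nonneg fun j _ => Nat.cast_nonneg _
  have hDe : 0 ≤ D * ε := mul_nonneg hD0 hε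
  by_cases hex : ∃ C : CMat dO dI N, IsQuantumComb dO dI C
  · obtain ⟨C0, hC0⟩ := hex
    have hTr : ∀ C : CMat dO dI N, IsQuantumComb dO dI C → C.trace = (D : ℂ) := by
      intro C hC
      rw [comb_trace hC, hDdef]
      push_cast
      rfl
    have hHerm : (M1 - M2).IsHermitian := h1.1.sub h2.1
    have hTNe : traceNorm (M1 - M2) = ∑ i, |hHerm.eigenvalues i| := traceNormAux hHerm
    have hTN : ∑ i, |hHerm.eigenvalues i| ≤ 2 * ε := hTNe ▸ hdist
    have hDtr : (M1 - M2).trace = 0 := by rw [Matrix.trace_sub, htr, sub_self]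
    have key : ∀ C : CMat dO dI N, IsQuantumComb dO dI C →
        |((M1 * C).trace).re - ((M2 * C).trace).re| ≤ D * ε := by
      intro C hC
      have h := core_bound hHerm hC.1 hD0 (hTr C hC) hDtr hTN
      rwa [Matrix.sub_mul, Matrix.trace_sub, Complex.sub_re] at h
    have hw1 : wmax dO dI M1
        = sSup {w : ℝ | ∃ C, IsQuantumComb dO dI C ∧ w = ((M1 * C).trace).re} := rfl
    have hw2 : wmax dO dI M2
        = sSup {w : ℝ | ∃ C, IsQuantumComb dO dI C ∧ w = ((M2 * C).trace).re} := rfl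
    have hne1 : {w : ℝ | ∃ C, IsQuantumComb dO dI C ∧ w = ((M1 * C).trace).re}.Nonempty :=
      ⟨_, C0, hC0, rfl⟩
    have hne2 : {w : ℝ | ∃ C, IsQuantumComb dO dI C ∧ w = ((M2 * C).trace).re}.Nonempty :=
      ⟨_, C0, hC0, rfl⟩
    have hbdd1 : BddAbove {w : ℝ | ∃ C, IsQuantumComb dO dI C ∧ w = ((M1 * C).trace).re} := by
      refine ⟨(M1.trace).re * D, ?_⟩
      rintro w ⟨C, hC, rfl⟩
      exact ub_bound h1 hC.1 hD0 (hTr C hC)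
    have hbdd2 : BddAbove {w : ℝ | ∃ C, IsQuantumComb dO dI C ∧ w = ((M2 * C).trace).re} := by
      refine ⟨(M2.trace).re * D, ?_⟩
      rintro w ⟨C, hC, rfl⟩
      exact ub_bound h2 hC.1 hD0 (hTr C hC)
    have hle1 : wmax dO dI M1 ≤ wmax dO dI M2 + D * ε := by
      rw [hw1, hw2]
      refine csSup_le hne1 ?_
      rintro w ⟨C, hC, rfl⟩
      have hk := (abs_le.1 (key C hC)).2
      have hmem : ((M2 * C).trace).re
          ≤ sSup {w : ℝ | ∃ C, IsQuantumComb dO dI C ∧ w = ((M2 * C).trace).re} :=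
        le_csSup hbdd2 ⟨C, hC, rfl⟩
      linarith
    have hle2 : wmax dO dI M2 ≤ wmax dO dI M1 + D * ε := by
      rw [hw1, hw2]
      refine csSup_le hne2 ?_
      rintro w ⟨C, hC, rfl⟩
      have hk := (abs_le.1 (key C hC)).1
      have hmem : ((M1 * C).trace).re
          ≤ sSup {w : ℝ | ∃ C, IsQuantumComb dO dI C ∧ w = ((M1 * C).trace).re} :=
        le_csSup hbdd1 ⟨C, hC, rfl⟩
      linarith
    rw [abs_sub_le_iff]
    exact ⟨by linarith, by linarith⟩
  · have hempty : ∀ M : CMat dO dI N,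
        {w : ℝ | ∃ C, IsQuantumComb dO dI C ∧ w = ((M * C).trace).re} = ∅ := by
      intro M
      ext w
      simp only [Set.mem_setOf_eq, Set.mem_empty_iff_false, iff_false, not_exists]
      rintro C ⟨hC, -⟩
      exact hex ⟨C, hC⟩
    have hw1 : wmax dO dI M1
        = sSup {w : ℝ | ∃ C, IsQuantumComb dO dI C ∧ w = ((M1 * C).trace).re} := rfl
    have hw2 : wmax dO dI M2
        = sSup {w : ℝ | ∃ C, IsQuantumComb dO dI C ∧ w = ((M2 * C).trace).re} := rfl
    rw [hw1, hw2, hempty, hempty, Real.sSup_empty, sub_self, abs_zero]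
    exact hDe

end QComb
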